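/- (Proposition 1 for mCS, attention-based case) The composition of the multiple cross-similarity mCS with the attention-based cross-set transformation is both symmetric and permutation invariant: for every N, M, d, d_g, d_w, h : ℕ, all Θ₁, Θ₂, Θ₃ : Matrix (Fin d_g) (Fin d) ℝ, every family W : Fin h → Matrix (Fin d_w) (Fin d_g) ℝ and output weights w_o : Fin h → ℝ, the function F(X, Y) := mCS(g_att(X, Y), g_att(Y, X)) satisfies (i) F(X, Y) = F(Y, X) for all X, Y : Fin N → (Fin d → ℝ) (taking M = N), and (ii) F(X ∘ π, Y ∘ σ) = F(X, Y) for all X : Fin N → (Fin d → ℝ), Y : Fin M → (Fin d → ℝ), π : Equiv.Perm (Fin N), σ : Equiv.Perm (Fin M). -/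
import Mathlib


open Matrix

/-- The cross-similarity of two tuples of feature vectors. -/
noncomputable def CS {N M d dw : ℕ} (W : Matrix (Fin dw) (Fin d) ℝ)
    (X : Fin N → Fin d → ℝ) (Y : Fin M → Fin d → ℝ) : ℝ :=
  (1 / ((N : ℝ) * M)) * ∑ n : Fin N, ∑ m : Fin M,
    max 0 ((W.mulVec (X n) ⬝ᵥ W.mulVec (Y m)) / Real.sqrt dw)

/-- The multiple cross-similarity: a weighted combination of cross-similarities
computed with different weight matrices. -/
noncomputable def mCS {N M d dw h : ℕ} (W : Fin h → Matrix (Fin dw) (Fin d) ℝ)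
    (wo : Fin h → ℝ) (X : Fin N → Fin d → ℝ) (Y : Fin M → Fin d → ℝ) : ℝ :=
  ∑ j : Fin h, wo j * CS (W j) X Y

/-- The attention-based cross-set map. -/
noncomputable def gAtt {N M e dg : ℕ} (Θ₁ Θ₂ Θ₃ : Matrix (Fin dg) (Fin e) ℝ)
    (X : Fin N → Fin e → ℝ) (Y : Fin M → Fin e → ℝ) : Fin N → Fin dg → ℝ :=
  fun n => (1 / (M : ℝ)) • ∑ m : Fin M,
    max 0 ((Θ₁.mulVec (X n) ⬝ᵥ Θ₂.mulVec (Y m)) / Real.sqrt dg) • Θ₃.mulVec (Y m)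

lemma CS_symm {N d dw : ℕ} (W : Matrix (Fin dw) (Fin d) ℝ)
    (X Y : Fin N → Fin d → ℝ) : CS W X Y = CS W Y X := by
  unfold CS
  rw [Finset.sum_comm]
  congr 1
  refine Finset.sum_congr rfl fun m _ => Finset.sum_congr rfl fun n _ => ?_
  rw [dotProduct_comm]

lemma CS_perm {N M d dw : ℕ} (W : Matrix (Fin dw) (Fin d) ℝ)
    (X : Fin N → Fin d → ℝ) (Y : Fin M → Fin d → ℝ)
    (π : Equiv.Perm (Fin N)) (σ : Equiv.Perm (Fin M)) :
    CS W (X ∘ π) (Y ∘ σ) = CS W X Y := by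
  unfold CS
  congr 1
  rw [← Equiv.sum_comp π (fun n => ∑ m : Fin M,
    max 0 ((W.mulVec (X n) ⬝ᵥ W.mulVec (Y m)) / Real.sqrt dw))]
  refine Finset.sum_congr rfl fun n _ => ?_
  exact Equiv.sum_comp σ (fun m =>
    max 0 ((W.mulVec (X (π n)) ⬝ᵥ W.mulVec (Y m)) / Real.sqrt dw))

lemma gAtt_perm {N M e dg : ℕ} (Θ₁ Θ₂ Θ₃ : Matrix (Fin dg) (Fin e) ℝ)
    (X : Fin N → Fin e → ℝ) (Y : Fin M → Fin e → ℝ)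
    (π : Equiv.Perm (Fin N)) (σ : Equiv.Perm (Fin M)) :
    gAtt Θ₁ Θ₂ Θ₃ (X ∘ π) (Y ∘ σ) = (gAtt Θ₁ Θ₂ Θ₃ X Y) ∘ π := by
  funext n
  unfold gAtt
  simp only [Function.comp_apply]
  congr 1
  exact Equiv.sum_comp σ (fun m =>
    max 0 ((Θ₁.mulVec (X (π n)) ⬝ᵥ Θ₂.mulVec (Y m)) / Real.sqrt dg) • Θ₃.mulVec (Y m))

/-- The composition of mCS with the attention-based cross-set transformation
(with shared weights) is symmetric (taking M = N) and permutation invariant. -/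
theorem mCS_gAtt_symm_and_perm_invariant (N M d dg dw h : ℕ)
    (Θ₁ Θ₂ Θ₃ : Matrix (Fin dg) (Fin d) ℝ)
    (W : Fin h → Matrix (Fin dw) (Fin dg) ℝ) (wo : Fin h → ℝ) :
    (∀ X Y : Fin N → Fin d → ℝ,
      mCS W wo (gAtt Θ₁ Θ₂ Θ₃ X Y) (gAtt Θ₁ Θ₂ Θ₃ Y X)
        = mCS W wo (gAtt Θ₁ Θ₂ Θ₃ Y X) (gAtt Θ₁ Θ₂ Θ₃ X Y)) ∧
    (∀ (X : Fin N → Fin d → ℝ) (Y : Fin M → Fin d → ℝ)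
      (π : Equiv.Perm (Fin N)) (σ : Equiv.Perm (Fin M)),
      mCS W wo (gAtt Θ₁ Θ₂ Θ₃ (X ∘ π) (Y ∘ σ)) (gAtt Θ₁ Θ₂ Θ₃ (Y ∘ σ) (X ∘ π))
        = mCS W wo (gAtt Θ₁ Θ₂ Θ₃ X Y) (gAtt Θ₁ Θ₂ Θ₃ Y X)) := by
  constructor
  · intro X Y
    unfold mCS
    exact Finset.sum_congr rfl fun j _ => by rw [CS_symm]
  · intro X Y π σ
    unfold mCS
    refine Finset.sum_congr rfl fun j _ => ?_
    rw [gAtt_perm Θ₁ Θ₂ Θ₃ X Y π σ, gAtt_perm Θ₁ Θ₂ Θ₃ Y X σ π, CS_perm]
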